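/- For k ≥ 1, let μ = (k+1,…,k+1,k−1) with k parts equal to k+1 and λ = (k+1,…,k+1,k,k) with k−1 parts equal to k+1. Then every k-deletion of μ and every k-deletion of λ is a (k−1)-deletion of the meet μ ∧ λ = (k+1,…,k+1,k,k−1) (with k−1 parts equal to k+1). -/

import Mathlib

/-- A partition: a nonincreasing sequence of naturals (rows indexed from 0),
with finitely many nonzero parts. -/
def IsPartition (f : ℕ → ℕ) : Prop :=
  (∀ ⦃i j : ℕ⦄, i ≤ j → f j ≤ f i) ∧ {i | f i ≠ 0}.Finite

/-- The number of cells of a partition. -/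
noncomputable def psize (f : ℕ → ℕ) : ℕ := ∑ᶠ i, f i

/-- `δ` is a `k`-deletion of `f`: a partition contained in `f` with `k` fewer cells. -/
def IsDeletion (k : ℕ) (δ f : ℕ → ℕ) : Prop :=
  IsPartition δ ∧ (∀ i, δ i ≤ f i) ∧ psize f = psize δ + k

/-- The conjugate: `conj f c` is the number of cells in (0-indexed) column `c`. -/
noncomputable def conj (f : ℕ → ℕ) (c : ℕ) : ℕ := Set.ncard {i | c < f i}

lemma psize_eq_sum (f : ℕ → ℕ) (n : ℕ) (h : ∀ i, n ≤ i → f i = 0) :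
    psize f = ∑ i ∈ Finset.range n, f i := by
  apply finsum_eq_finset_sum_of_support_subset
  intro i hi
  simp only [Function.mem_support] at hi
  simp only [Finset.coe_range, Set.mem_Iio]
  by_contra hc
  exact hi (h i (le_of_not_gt hc))

lemma sum_le_psize (f : ℕ → ℕ) (hf : {i | f i ≠ 0}.Finite) (n : ℕ) :
    ∑ i ∈ Finset.range n, f i ≤ psize f := by
  have hsupp : (Function.support f).Finite := hf
  have h1 : psize f = ∑ i ∈ hsupp.toFinset ∪ Finset.range n, f i := by
    apply finsum_eq_finset_sum_of_support_subset
    intro i hi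
    simp only [Finset.coe_union, Set.Finite.coe_toFinset, Set.mem_union]
    exact Or.inl hi
  rw [h1]
  exact Finset.sum_le_sum_of_subset Finset.subset_union_right

/-- Every k-deletion of μ and of λ is a (k−1)-deletion of the meet μ ∧ λ. -/
theorem deletions_below_meet (k : ℕ) (hk : 1 ≤ k) :
    let μ : ℕ → ℕ := fun i => if i < k then k + 1 else if i = k then k - 1 else 0
    let lam : ℕ → ℕ := fun i => if i < k - 1 then k + 1 else if i < k + 1 then k else 0
    let m : ℕ → ℕ := fun i => min (μ i) (lam i)
    ∀ δ : ℕ → ℕ, (IsDeletion k δ μ ∨ IsDeletion k δ lam) → IsDeletion (k - 1) δ m := by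
  intro μ lam m δ h
  obtain ⟨n, rfl⟩ : ∃ n, k = n + 1 := ⟨k - 1, by omega⟩
  have hr1 : (n + 1) * (n + 2) = n * n + 3 * n + 2 := by ring
  have hr2 : (n + 2) * (n + 1) = n * n + 3 * n + 2 := by ring
  have hr3 : n * (n + 2) = n * n + 2 * n := by ring
  have hμval : ∀ i, μ i = if i < n + 1 then n + 2 else if i = n + 1 then n else 0 := by
    intro i; simp only [μ]; norm_num
  have hlamval : ∀ i, lam i = if i < n then n + 2 else if i < n + 2 then n + 1 else 0 := by
    intro i; simp only [lam]; norm_num; split_ifs <;> omega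
  have hconst : ∀ N c : ℕ, ∑ _i ∈ Finset.range N, c = N * c := by
    intro N c
    rw [Finset.sum_const, Finset.card_range, smul_eq_mul]
  -- psize μ
  have hSμ : psize μ = n * n + 4 * n + 2 := by
    rw [psize_eq_sum μ (n + 2) (fun i hi => by rw [hμval]; split_ifs <;> omega)]
    rw [Finset.sum_range_succ]
    have h1 : ∑ i ∈ Finset.range (n + 1), μ i = (n + 1) * (n + 2) := by
      have he : ∀ i ∈ Finset.range (n + 1), μ i = n + 2 := fun i hi => by
        rw [hμval]; simp [Finset.mem_range.mp hi]
      rw [Finset.sum_congr rfl he, hconst]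
    rw [h1, hμval]
    split_ifs <;> omega
  -- psize lam
  have hSlam : psize lam = n * n + 4 * n + 2 := by
    rw [psize_eq_sum lam (n + 2) (fun i hi => by rw [hlamval]; split_ifs <;> omega)]
    rw [Finset.sum_range_succ, Finset.sum_range_succ]
    have h1 : ∑ i ∈ Finset.range n, lam i = n * (n + 2) := by
      have he : ∀ i ∈ Finset.range n, lam i = n + 2 := fun i hi => by
        rw [hlamval]; simp [Finset.mem_range.mp hi]
      rw [Finset.sum_congr rfl he, hconst]
    rw [h1, hlamval, hlamval]
    split_ifs <;> omega
  -- the meet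
  have hmval : ∀ i, m i = if i < n then n + 2 else if i = n then n + 1
      else if i = n + 1 then n else 0 := by
    intro i
    simp only [m]
    rw [hμval, hlamval]
    split_ifs <;> omega
  have hSm : psize m = n * n + 4 * n + 1 := by
    rw [psize_eq_sum m (n + 2) (fun i hi => by rw [hmval]; split_ifs <;> omega)]
    rw [Finset.sum_range_succ, Finset.sum_range_succ]
    have h1 : ∑ i ∈ Finset.range n, m i = n * (n + 2) := by
      have he : ∀ i ∈ Finset.range n, m i = n + 2 := fun i hi => by
        rw [hmval]; simp [Finset.mem_range.mp hi]
      rw [Finset.sum_congr rfl he, hconst]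
    rw [h1, hmval, hmval]
    split_ifs <;> omega
  rcases h with ⟨hpart, hle, hsize⟩ | ⟨hpart, hle, hsize⟩
  · -- μ case: rule out δ n = n + 2
    have hδn : δ n ≤ n + 1 := by
      by_contra hcon
      push_neg at hcon
      have hsum : (n + 1) * (n + 2) ≤ ∑ i ∈ Finset.range (n + 1), δ i := by
        calc (n + 1) * (n + 2) = ∑ _i ∈ Finset.range (n + 1), (n + 2) := (hconst _ _).symm
          _ ≤ _ := Finset.sum_le_sum (fun i hi => by
              have := hpart.1 (Nat.le_of_lt_succ (Finset.mem_range.mp hi))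
              omega)
      have hps := sum_le_psize δ hpart.2 (n + 1)
      omega
    refine ⟨hpart, fun i => ?_, by omega⟩
    rcases eq_or_ne i n with rfl | hi
    · rw [hmval]
      split_ifs <;> omega
    · have h1 := hle i
      rw [hμval] at h1
      rw [hmval]
      split_ifs at h1 ⊢ <;> omega
  · -- lam case: rule out δ (n+1) = n + 1
    have hδn : δ (n + 1) ≤ n := by
      by_contra hcon
      push_neg at hcon
      have hsum : (n + 2) * (n + 1) ≤ ∑ i ∈ Finset.range (n + 2), δ i := by
        calc (n + 2) * (n + 1) = ∑ _i ∈ Finset.range (n + 2), (n + 1) := (hconst _ _).symm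
          _ ≤ _ := Finset.sum_le_sum (fun i hi => by
              have := hpart.1 (Nat.le_of_lt_succ (Finset.mem_range.mp hi))
              omega)
      have hps := sum_le_psize δ hpart.2 (n + 2)
      omega
    refine ⟨hpart, fun i => ?_, by omega⟩
    rcases eq_or_ne i (n + 1) with rfl | hi
    · rw [hmval]
      split_ifs <;> omega
    · have h1 := hle i
      rw [hlamval] at h1
      rw [hmval]
      split_ifs at h1 ⊢ <;> omega
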